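/- Let α ∈ ℝ and let ξ₁, ξ₂, μ₁, μ₂ ∈ ℝ with ξ₁ ≠ 0, ξ₂ ≠ 0, ξ₁ + ξ₂ ≠ 0, |ξ₂| ≤ |ξ₁| and ξ₁² ≥ 6|α|. If (μ₁/ξ₁ − μ₂/ξ₂)² ≤ (1/2) (ξ₁+ξ₂)² (5(ξ₁² + ξ₁ξ₂ + ξ₂²) − 3α), then |R(ξ₁,ξ₂,μ₁,μ₂)| ≥ |ξ₁|³ |ξ₂| |ξ₁+ξ₂|. -/

import Mathlib

/-- The dispersion relation of the fifth order KP-I equation with parameter `α`: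
`ω(ξ,μ) = ξ⁵ − αξ³ + μ²/ξ` (for `ξ ≠ 0`). -/
noncomputable def omega5 (α ξ μ : ℝ) : ℝ := ξ ^ 5 - α * ξ ^ 3 + μ ^ 2 / ξ

/-- The resonance function of the fifth order KP-I equation:
`R(ξ₁,ξ₂,μ₁,μ₂) = ω(ξ₁+ξ₂,μ₁+μ₂) − ω(ξ₁,μ₁) − ω(ξ₂,μ₂)`. -/
noncomputable def resonance5 (α ξ₁ ξ₂ μ₁ μ₂ : ℝ) : ℝ :=
  omega5 α (ξ₁ + ξ₂) (μ₁ + μ₂) - omega5 α ξ₁ μ₁ - omega5 α ξ₂ μ₂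

/-- Quantitative non-resonance bound used in the high-high frequency
interaction of the bilinear estimate for the fifth order KP-I equation. -/
theorem resonance5_highhigh_lower_bound (α ξ₁ ξ₂ μ₁ μ₂ : ℝ)
    (h₁ : ξ₁ ≠ 0) (h₂ : ξ₂ ≠ 0) (h₁₂ : ξ₁ + ξ₂ ≠ 0)
    (hord : |ξ₂| ≤ |ξ₁|) (hα : 6 * |α| ≤ ξ₁ ^ 2)
    (hres : (μ₁ / ξ₁ - μ₂ / ξ₂) ^ 2 ≤
      (1 / 2) * (ξ₁ + ξ₂) ^ 2 * (5 * (ξ₁ ^ 2 + ξ₁ * ξ₂ + ξ₂ ^ 2) - 3 * α)) :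
    |ξ₁| ^ 3 * |ξ₂| * |ξ₁ + ξ₂| ≤ |resonance5 α ξ₁ ξ₂ μ₁ μ₂| := by
  set P : ℝ := ξ₁ * ξ₂ * (ξ₁ + ξ₂) with hPdef
  set A : ℝ := 5 * (ξ₁ ^ 2 + ξ₁ * ξ₂ + ξ₂ ^ 2) - 3 * α with hAdef
  set D : ℝ := ξ₂ * μ₁ - ξ₁ * μ₂ with hDdef
  have hP : P ≠ 0 := by
    simp [hPdef, h₁, h₂, h₁₂]
  have hAge : 2 * ξ₁ ^ 2 ≤ A := by
    have h1 : α ≤ |α| := le_abs_self α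
    have h2 : -|α| ≤ α := neg_abs_le α
    have h3 : ξ₁ * ξ₂ ≤ |ξ₁| * |ξ₂| := le_trans (le_abs_self _) (le_of_eq (abs_mul _ _))
    have h4 : -(|ξ₁| * |ξ₂|) ≤ ξ₁ * ξ₂ := by
      have := neg_abs_le (ξ₁ * ξ₂); rw [abs_mul] at this; linarith
    have h5 : |ξ₂| ^ 2 = ξ₂ ^ 2 := sq_abs ξ₂
    have h6 : |ξ₁| ^ 2 = ξ₁ ^ 2 := sq_abs ξ₁
    nlinarith [sq_nonneg (|ξ₁| - 2 * |ξ₂|), sq_nonneg (|ξ₁| - |ξ₂|), abs_nonneg ξ₁, abs_nonneg ξ₂]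
  have hDkey : D ^ 2 = (μ₁ / ξ₁ - μ₂ / ξ₂) ^ 2 * (ξ₁ * ξ₂) ^ 2 := by
    field_simp
    ring
  have hD : D ^ 2 ≤ (1 / 2) * P ^ 2 * A := by
    rw [hDkey]
    have := mul_le_mul_of_nonneg_right hres (sq_nonneg (ξ₁ * ξ₂))
    calc (μ₁ / ξ₁ - μ₂ / ξ₂) ^ 2 * (ξ₁ * ξ₂) ^ 2
        ≤ (1 / 2) * (ξ₁ + ξ₂) ^ 2 * A * (ξ₁ * ξ₂) ^ 2 := this
      _ = (1 / 2) * P ^ 2 * A := by rw [hPdef]; ring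
  have hRP : resonance5 α ξ₁ ξ₂ μ₁ μ₂ * P = P ^ 2 * A - D ^ 2 := by
    simp only [resonance5, omega5, hPdef, hAdef, hDdef]
    field_simp
    ring
  clear_value P A D
  have hmain : ξ₁ ^ 2 * P ^ 2 ≤ P ^ 2 * A - D ^ 2 := by
    have h := mul_le_mul_of_nonneg_left hAge (sq_nonneg P)
    nlinarith [sq_nonneg D]
  have habsP : (0:ℝ) < |P| := abs_pos.mpr hP
  rw [← mul_le_mul_iff_left₀ habsP]
  have h1 : |resonance5 α ξ₁ ξ₂ μ₁ μ₂| * |P| = P ^ 2 * A - D ^ 2 := by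
    rw [← abs_mul, hRP, abs_of_nonneg]
    have h := mul_le_mul_of_nonneg_left hAge (sq_nonneg P)
    nlinarith [sq_nonneg (ξ₁ * P)]
  rw [h1]
  have h2 : |ξ₁| ^ 3 * |ξ₂| * |ξ₁ + ξ₂| * |P| = ξ₁ ^ 2 * P ^ 2 := by
    have : |P| = |ξ₁| * |ξ₂| * |ξ₁ + ξ₂| := by rw [hPdef, abs_mul, abs_mul]
    rw [this]
    have : P ^ 2 = (|ξ₁| * |ξ₂| * |ξ₁ + ξ₂|) ^ 2 := by
      rw [hPdef, ← abs_mul, ← abs_mul, sq_abs]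
    rw [this, ← sq_abs ξ₁]
    ring
  rw [h2]
  exact hmain
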